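/- There is an absolute constant C > 0 such that for every r > 0 and every t > 0, |C₁(r,t)| ≤ C / t. (Consequently the free Klein–Gordon cosine kernel C₁ obeys the same |t|^{-1} pointwise decay as the free wave equation.) -/

import Mathlib

/-- The Bessel function of the first kind of integer order `n`, defined via the
integral representation `J_n(x) = (1/(2π)) ∫_{-π}^{π} e^{i(n s + x sin s)} ds`. -/
noncomputable def besselJ (n : ℤ) (x : ℝ) : ℝ :=
  (1 / (2 * Real.pi)) *
    (∫ s in (-Real.pi)..Real.pi,
      Complex.exp (Complex.I * ((n : ℂ) * (s : ℂ) + (x : ℂ) * (Real.sin s : ℂ)))).re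

open MeasureTheory Real Set Filter Topology intervalIntegral

lemma besselJ_eq (n : ℤ) (x : ℝ) :
    besselJ n x = (1 / (2 * Real.pi)) *
      ∫ s in (-Real.pi)..Real.pi, Real.cos (n * s + x * Real.sin s) := by
  unfold besselJ
  congr 1
  have h : ∀ s : ℝ, Complex.exp (Complex.I * ((n : ℂ) * (s : ℂ) + (x : ℂ) * (Real.sin s : ℂ)))
      = (Real.cos (n * s + x * Real.sin s) : ℂ) + (Real.sin (n * s + x * Real.sin s) : ℂ) * Complex.I := by
    intro s
    have : Complex.I * ((n : ℂ) * (s : ℂ) + (x : ℂ) * (Real.sin s : ℂ))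
        = ((n * s + x * Real.sin s : ℝ) : ℂ) * Complex.I := by push_cast; ring
    rw [this, Complex.exp_mul_I]
    push_cast [Complex.ofReal_cos, Complex.ofReal_sin]
    ring
  rw [intervalIntegral.integral_congr (fun s _ => h s)]
  have hc : Continuous fun s : ℝ => Real.cos (n * s + x * Real.sin s) := by fun_prop
  have hs : Continuous fun s : ℝ => Real.sin (n * s + x * Real.sin s) := by fun_prop
  rw [intervalIntegral.integral_add, intervalIntegral.integral_mul_const]
  · rw [intervalIntegral.integral_ofReal, intervalIntegral.integral_ofReal]
    simp
  · exact ((Complex.continuous_ofReal.comp hc).intervalIntegrable _ _)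
  · exact (((Complex.continuous_ofReal.comp hs).mul continuous_const).intervalIntegrable _ _)

lemma abs_besselJ_le_one (n : ℤ) (x : ℝ) : |besselJ n x| ≤ 1 := by
  rw [besselJ_eq]
  have h : ‖∫ s in (-Real.pi)..Real.pi, Real.cos (n * s + x * Real.sin s)‖ ≤ 1 * |Real.pi - (-Real.pi)| := by
    apply intervalIntegral.norm_integral_le_of_norm_le_const
    intro s _
    exact abs_cos_le_one _
  rw [Real.norm_eq_abs] at h
  have hpi := Real.pi_pos
  rw [abs_mul]
  have : |Real.pi - (-Real.pi)| = 2 * Real.pi := by rw [abs_of_pos (by linarith)]; ring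
  rw [this, one_mul] at h
  calc |1 / (2 * Real.pi)| * |∫ s in (-Real.pi)..Real.pi, Real.cos (n * s + x * Real.sin s)|
      ≤ |1 / (2 * Real.pi)| * (2 * Real.pi) := by
        apply mul_le_mul_of_nonneg_left h (abs_nonneg _)
    _ = 1 := by rw [abs_of_pos (by positivity)]; field_simp

lemma hasDerivAt_besselJ (n : ℤ) (x : ℝ) :
    HasDerivAt (besselJ n)
      ((1 / (2 * Real.pi)) *
        ∫ s in (-Real.pi)..Real.pi, -(Real.sin s * Real.sin (n * s + x * Real.sin s))) x := by
  have hfun : besselJ n = fun y => (1 / (2 * Real.pi)) *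
      ∫ s in (-Real.pi)..Real.pi, Real.cos (n * s + y * Real.sin s) := funext (besselJ_eq n)
  rw [hfun]
  have key := intervalIntegral.hasDerivAt_integral_of_dominated_loc_of_deriv_le
    (F := fun y s => Real.cos (n * s + y * Real.sin s))
    (F' := fun y s => -(Real.sin s * Real.sin (n * s + y * Real.sin s)))
    (x₀ := x) (a := -Real.pi) (b := Real.pi) (bound := fun _ => 1) (μ := volume)
    (s := Metric.ball x 1) (Metric.ball_mem_nhds x one_pos) ?_ ?_ ?_ ?_ ?_ ?_
  · exact key.2.const_mul _
  · filter_upwards with y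
    exact (Continuous.aestronglyMeasurable (by fun_prop)).restrict
  · exact (Continuous.intervalIntegrable (by fun_prop) _ _)
  · exact (Continuous.aestronglyMeasurable (by fun_prop)).restrict
  · filter_upwards with s _ y _
    rw [norm_neg, norm_mul, Real.norm_eq_abs, Real.norm_eq_abs]
    calc |Real.sin s| * |Real.sin (n * s + y * Real.sin s)| ≤ 1 * 1 :=
      mul_le_mul (abs_sin_le_one _) (abs_sin_le_one _) (abs_nonneg _) zero_le_one
    _ = 1 := by ring
  · exact (continuous_const.intervalIntegrable _ _)
  · filter_upwards with s _ y _
    have h1 : HasDerivAt (fun y : ℝ => (n : ℝ) * s + y * Real.sin s) (Real.sin s) y := by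
      simpa using ((hasDerivAt_id y).mul_const (Real.sin s)).const_add ((n : ℝ) * s)
    exact ((Real.hasDerivAt_cos ((n:ℝ) * s + y * Real.sin s)).comp y h1).congr_deriv
      (by ring : _ = -(Real.sin s * Real.sin ((n:ℝ) * s + y * Real.sin s)))

lemma integral_cos_mul_cos (x : ℝ) :
    ∫ s in (-Real.pi)..Real.pi, Real.cos s * Real.cos (x * Real.sin s) = 0 := by
  rcases eq_or_ne x 0 with h | h
  · simp [h, integral_cos]
  · have hd : ∀ s ∈ uIcc (-Real.pi) Real.pi,
        HasDerivAt (fun s => Real.sin (x * Real.sin s) / x)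
          (Real.cos s * Real.cos (x * Real.sin s)) s := by
      intro s _
      have h1 : HasDerivAt (fun s : ℝ => x * Real.sin s) (x * Real.cos s) s :=
        (Real.hasDerivAt_sin s).const_mul x
      have h2 := ((Real.hasDerivAt_sin (x * Real.sin s)).comp s h1).div_const x
      refine h2.congr_deriv ?_
      field_simp
    rw [integral_eq_sub_of_hasDerivAt hd (Continuous.intervalIntegrable (by fun_prop) _ _)]
    simp

lemma hasDerivAt_besselJ_zero (x : ℝ) : HasDerivAt (besselJ 0) (besselJ 1 x) x := by
  have h := hasDerivAt_besselJ 0 x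
  have key : (1 / (2 * Real.pi)) *
      ∫ s in (-Real.pi)..Real.pi, -(Real.sin s * Real.sin ((0:ℤ) * s + x * Real.sin s))
      = besselJ 1 x := by
    rw [besselJ_eq]
    congr 1
    have e1 : ∀ s : ℝ, Real.cos ((1:ℤ) * s + x * Real.sin s)
        = Real.cos s * Real.cos (x * Real.sin s) + -(Real.sin s * Real.sin ((0:ℤ) * s + x * Real.sin s)) := by
      intro s
      push_cast
      rw [one_mul, Real.cos_add]
      ring_nf
    rw [intervalIntegral.integral_congr (fun s _ => e1 s), intervalIntegral.integral_add
      (Continuous.intervalIntegrable (by fun_prop) _ _) (Continuous.intervalIntegrable (by fun_prop) _ _),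
      integral_cos_mul_cos, zero_add]
  rw [key] at h
  exact h

lemma integral_cos_eq (x : ℝ) (k : ℤ) :
    ∫ s in (-Real.pi)..Real.pi, Real.cos ((k:ℝ) * s + x * Real.sin s)
      = 2 * Real.pi * besselJ k x := by
  rw [besselJ_eq]
  have hpi := Real.pi_ne_zero
  field_simp

lemma besselJ_rec (x : ℝ) (hx : x ≠ 0) :
    besselJ 2 x = -(2 / x) * besselJ 1 x - besselJ 0 x := by
  have hd : ∀ s ∈ uIcc (-Real.pi) Real.pi,
      HasDerivAt (fun s => Real.sin (s + x * Real.sin s))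
        ((1 + x * Real.cos s) * Real.cos (s + x * Real.sin s)) s := by
    intro s _
    have h1 : HasDerivAt (fun s : ℝ => s + x * Real.sin s) (1 + x * Real.cos s) s :=
      (hasDerivAt_id s).add ((Real.hasDerivAt_sin s).const_mul x)
    have := (Real.hasDerivAt_sin (s + x * Real.sin s)).comp s h1
    exact this.congr_deriv (by ring)
  have h0 : ∫ s in (-Real.pi)..Real.pi, (1 + x * Real.cos s) * Real.cos (s + x * Real.sin s) = 0 := by
    rw [integral_eq_sub_of_hasDerivAt hd (Continuous.intervalIntegrable (by fun_prop) _ _)]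
    simp [Real.sin_add]
  have e : ∀ s : ℝ, (1 + x * Real.cos s) * Real.cos (s + x * Real.sin s)
      = Real.cos (((1:ℤ):ℝ) * s + x * Real.sin s)
        + (x/2) * Real.cos (((2:ℤ):ℝ) * s + x * Real.sin s)
        + (x/2) * Real.cos (((0:ℤ):ℝ) * s + x * Real.sin s) := by
    intro s
    push_cast
    simp only [Real.cos_add, Real.sin_add, one_mul, zero_mul, zero_add, Real.cos_two_mul,
      Real.sin_two_mul, Real.cos_zero, Real.sin_zero]
    nlinarith [Real.sin_sq_add_cos_sq s]
  rw [intervalIntegral.integral_congr (fun s _ => e s)] at h0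
  rw [intervalIntegral.integral_add (Continuous.intervalIntegrable (by fun_prop) _ _)
      (Continuous.intervalIntegrable (by fun_prop) _ _),
    intervalIntegral.integral_add (Continuous.intervalIntegrable (by fun_prop) _ _)
      (Continuous.intervalIntegrable (by fun_prop) _ _),
    intervalIntegral.integral_const_mul, intervalIntegral.integral_const_mul,
    integral_cos_eq x 1, integral_cos_eq x 2, integral_cos_eq x 0] at h0
  have hpi := Real.pi_pos
  field_simp at h0 ⊢
  nlinarith [h0]

lemma hasDerivAt_besselJ_one (x : ℝ) (hx : x ≠ 0) :
    HasDerivAt (besselJ 1) (-besselJ 0 x - besselJ 1 x / x) x := by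
  have h := hasDerivAt_besselJ 1 x
  have e : ∀ s : ℝ, -(Real.sin s * Real.sin (((1:ℤ):ℝ) * s + x * Real.sin s))
      = (1/2) * Real.cos (((2:ℤ):ℝ) * s + x * Real.sin s)
        - (1/2) * Real.cos (((0:ℤ):ℝ) * s + x * Real.sin s) := by
    intro s
    push_cast
    simp only [Real.cos_add, Real.sin_add, one_mul, zero_mul, zero_add, Real.cos_two_mul,
      Real.sin_two_mul, Real.cos_zero, Real.sin_zero]
    linear_combination (-Real.cos (x * Real.sin s)) * Real.sin_sq_add_cos_sq s
  rw [intervalIntegral.integral_congr (fun s _ => e s)] at h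
  rw [intervalIntegral.integral_sub (Continuous.intervalIntegrable (by fun_prop) _ _)
      (Continuous.intervalIntegrable (by fun_prop) _ _),
    intervalIntegral.integral_const_mul, intervalIntegral.integral_const_mul,
    integral_cos_eq x 2, integral_cos_eq x 0, besselJ_rec x hx] at h
  have hpi := Real.pi_pos
  have : (1 / (2 * Real.pi)) * (1 / 2 * (2 * Real.pi * (-(2 / x) * besselJ 1 x - besselJ 0 x))
      - 1 / 2 * (2 * Real.pi * besselJ 0 x)) = -besselJ 0 x - besselJ 1 x / x := by
    field_simp
    ring
  rwa [this] at h

lemma besselJ_one_zero : besselJ 1 0 = 0 := by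
  rw [besselJ_eq]
  have : ∀ s ∈ uIcc (-Real.pi) Real.pi,
      Real.cos (((1:ℤ):ℝ) * s + 0 * Real.sin s) = Real.cos s := by
    intro s _; norm_num
  rw [intervalIntegral.integral_congr this, integral_cos]
  simp

lemma abs_besselJ_one_le (x : ℝ) : |besselJ 1 x| ≤ |x| := by
  have hb : ∀ y : ℝ, ‖(1 / (2 * Real.pi)) *
      ∫ s in (-Real.pi)..Real.pi, -(Real.sin s * Real.sin (((1:ℤ):ℝ) * s + y * Real.sin s))‖ ≤ 1 := by
    intro y
    have h : ‖∫ s in (-Real.pi)..Real.pi, -(Real.sin s * Real.sin (((1:ℤ):ℝ) * s + y * Real.sin s))‖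
        ≤ 1 * |Real.pi - (-Real.pi)| := by
      apply intervalIntegral.norm_integral_le_of_norm_le_const
      intro s _
      rw [norm_neg, norm_mul, Real.norm_eq_abs, Real.norm_eq_abs]
      calc |Real.sin s| * |Real.sin (((1:ℤ):ℝ) * s + y * Real.sin s)| ≤ 1 * 1 :=
        mul_le_mul (abs_sin_le_one _) (abs_sin_le_one _) (abs_nonneg _) zero_le_one
      _ = 1 := by ring
    have hpi := Real.pi_pos
    rw [norm_mul, Real.norm_eq_abs, Real.norm_eq_abs]
    have h2 : |Real.pi - (-Real.pi)| = 2 * Real.pi := by rw [abs_of_pos (by linarith)]; ring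
    rw [h2, one_mul] at h
    calc |1 / (2 * Real.pi)| * |∫ s in (-Real.pi)..Real.pi,
          -(Real.sin s * Real.sin (((1:ℤ):ℝ) * s + y * Real.sin s))|
        ≤ |1 / (2 * Real.pi)| * (2 * Real.pi) := mul_le_mul_of_nonneg_left h (abs_nonneg _)
      _ = 1 := by rw [abs_of_pos (by positivity)]; field_simp
  have key := Convex.norm_image_sub_le_of_norm_hasDerivWithin_le
    (f := besselJ 1)
    (f' := fun y => (1 / (2 * Real.pi)) *
      ∫ s in (-Real.pi)..Real.pi, -(Real.sin s * Real.sin (((1:ℤ):ℝ) * s + y * Real.sin s)))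
    (C := 1) (s := Set.univ)
    (fun y _ => (hasDerivAt_besselJ 1 y).hasDerivWithinAt)
    (fun y _ => hb y) convex_univ (Set.mem_univ 0) (Set.mem_univ x)
  simpa [besselJ_one_zero] using key

@[continuity, fun_prop]
lemma continuous_besselJ (n : ℤ) : Continuous (besselJ n) :=
  continuous_iff_continuousAt.2 fun x => (hasDerivAt_besselJ n x).continuousAt

lemma hasDerivAt_u (x : ℝ) (hx : x ≠ 0) :
    HasDerivAt (fun y => y * (besselJ 0 y ^ 2 + besselJ 1 y ^ 2))
      (besselJ 0 x ^ 2 - besselJ 1 x ^ 2) x := by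
  have h0 := hasDerivAt_besselJ_zero x
  have h1 := hasDerivAt_besselJ_one x hx
  have h := (hasDerivAt_id x).mul ((h0.pow 2).add (h1.pow 2))
  refine h.congr_deriv ?_
  simp only [Pi.add_apply, Pi.pow_apply, Pi.mul_apply, Pi.div_apply, id]
  field_simp
  ring

lemma hasDerivAt_v (x : ℝ) (hx : x ≠ 0) :
    HasDerivAt (fun y => y * besselJ 0 y * besselJ 1 y)
      (x * (besselJ 1 x ^ 2 - besselJ 0 x ^ 2)) x := by
  have h0 := hasDerivAt_besselJ_zero x
  have h1 := hasDerivAt_besselJ_one x hx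
  have h := ((hasDerivAt_id x).mul h0).mul h1
  refine h.congr_deriv ?_
  simp only [Pi.add_apply, Pi.pow_apply, Pi.mul_apply, Pi.div_apply, id]
  field_simp
  ring

lemma hasDerivAt_w (x : ℝ) (hx : x ≠ 0) :
    HasDerivAt (fun y => y * besselJ 0 y * besselJ 1 y / y)
      ((besselJ 1 x ^ 2 - besselJ 0 x ^ 2) - x * besselJ 0 x * besselJ 1 x / x ^ 2) x := by
  have h := (hasDerivAt_v x hx).div (hasDerivAt_id x) hx
  refine h.congr_deriv ?_
  simp only [Pi.add_apply, Pi.pow_apply, Pi.mul_apply, Pi.div_apply, id]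
  field_simp

lemma besselJ_sq_le_one (n : ℤ) (y : ℝ) : besselJ n y ^ 2 ≤ 1 := by
  rw [← sq_abs]
  nlinarith [abs_besselJ_le_one n y, abs_nonneg (besselJ n y)]

set_option maxHeartbeats 2000000 in
lemma besselJ_decay (x : ℝ) (hx : 4 ≤ x) :
    x * (besselJ 0 x ^ 2 + besselJ 1 x ^ 2) ≤ 12 := by
  set u : ℝ → ℝ := fun y => y * (besselJ 0 y ^ 2 + besselJ 1 y ^ 2) with hu_def
  set v : ℝ → ℝ := fun y => y * besselJ 0 y * besselJ 1 y with hv_def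
  have hucont : Continuous u :=
    continuous_id.mul (((continuous_besselJ 0).pow 2).add ((continuous_besselJ 1).pow 2))
  have hvcont : Continuous v :=
    (continuous_id.mul (continuous_besselJ 0)).mul (continuous_besselJ 1)
  obtain ⟨x₀, hx₀mem, hmax⟩ := (isCompact_Icc : IsCompact (Icc (4:ℝ) x)).exists_isMaxOn
    ⟨4, left_mem_Icc.2 hx⟩ hucont.continuousOn
  have hmaxle : ∀ y ∈ Icc (4:ℝ) x, u y ≤ u x₀ := fun y hy => hmax hy
  have h4x₀ : (4:ℝ) ≤ x₀ := hx₀mem.1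
  have hx₀pos : (0:ℝ) < x₀ := by linarith
  have huIcc : uIcc (4:ℝ) x₀ = Icc 4 x₀ := uIcc_of_le h4x₀
  -- FTC for u
  have hA : ∫ s in (4:ℝ)..x₀, (besselJ 0 s ^ 2 - besselJ 1 s ^ 2) = u x₀ - u 4 := by
    apply integral_eq_sub_of_hasDerivAt
    · intro s hs
      rw [huIcc] at hs
      exact hasDerivAt_u s (by linarith [hs.1])
    · exact (Continuous.intervalIntegrable (by continuity) _ _)
  -- FTC for v/s
  have hB : ∫ s in (4:ℝ)..x₀, ((besselJ 1 s ^ 2 - besselJ 0 s ^ 2) - v s / s ^ 2)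
      = v x₀ / x₀ - v 4 / 4 := by
    apply integral_eq_sub_of_hasDerivAt
    · intro s hs
      rw [huIcc] at hs
      exact hasDerivAt_w s (by linarith [hs.1])
    · apply ContinuousOn.intervalIntegrable
      apply ContinuousOn.sub (Continuous.continuousOn (by continuity))
      apply ContinuousOn.div hvcont.continuousOn (Continuous.continuousOn (by continuity))
      intro s hs
      rw [huIcc] at hs
      have : (0:ℝ) < s := by linarith [hs.1]
      positivity
  have hintA : IntervalIntegrable (fun s => besselJ 0 s ^ 2 - besselJ 1 s ^ 2) volume 4 x₀ :=
    Continuous.intervalIntegrable (by continuity) _ _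
  have hintB : IntervalIntegrable (fun s => (besselJ 1 s ^ 2 - besselJ 0 s ^ 2) - v s / s ^ 2)
      volume 4 x₀ := by
    apply ContinuousOn.intervalIntegrable
    apply ContinuousOn.sub (Continuous.continuousOn (by continuity))
    apply ContinuousOn.div hvcont.continuousOn (Continuous.continuousOn (by continuity))
    intro s hs
    rw [huIcc] at hs
    have : (0:ℝ) < s := by linarith [hs.1]
    positivity
  have hAB : u x₀ - u 4 + (v x₀ / x₀ - v 4 / 4) = ∫ s in (4:ℝ)..x₀, -(v s / s ^ 2) := by
    rw [← hA, ← hB, ← intervalIntegral.integral_add hintA hintB]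
    apply intervalIntegral.integral_congr
    intro s _
    ring
  -- bounds
  have hu4 : u 4 ≤ 8 := by
    have h0 := besselJ_sq_le_one 0 4
    have h1 := besselJ_sq_le_one 1 4
    simp only [hu_def]
    nlinarith
  have hvabs : ∀ y : ℝ, 0 ≤ y → |v y| ≤ u y / 2 := by
    intro y hy
    simp only [hv_def, hu_def]
    rw [abs_mul, abs_mul, abs_of_nonneg hy]
    nlinarith [sq_nonneg (|besselJ 0 y| - |besselJ 1 y|), abs_nonneg (besselJ 0 y),
      abs_nonneg (besselJ 1 y), sq_abs (besselJ 0 y), sq_abs (besselJ 1 y)]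
  have hunn : ∀ y : ℝ, 0 ≤ y → 0 ≤ u y := by
    intro y hy
    simp only [hu_def]
    positivity
  have hux₀ : 0 ≤ u x₀ := hunn x₀ (by linarith)
  -- bound the integral
  have hptwise : ∀ s ∈ Icc (4:ℝ) x₀, |(-(v s / s ^ 2))| ≤ (u x₀ / 2) * (s ^ 2)⁻¹ := by
    intro s hs
    have hs0 : (0:ℝ) < s := by linarith [hs.1]
    rw [abs_neg, abs_div, abs_of_pos (by positivity : (0:ℝ) < s ^ 2)]
    rw [div_eq_mul_inv]
    apply mul_le_mul_of_nonneg_right _ (by positivity)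
    calc |v s| ≤ u s / 2 := hvabs s hs0.le
      _ ≤ u x₀ / 2 := by
          have : s ∈ Icc (4:ℝ) x := ⟨hs.1, le_trans hs.2 hx₀mem.2⟩
          linarith [hmaxle s this]
  have hinv : ∫ s in (4:ℝ)..x₀, (s ^ 2)⁻¹ = 4⁻¹ - x₀⁻¹ := by
    have : ∫ s in (4:ℝ)..x₀, (s ^ 2)⁻¹ = (fun y : ℝ => -y⁻¹) x₀ - (fun y : ℝ => -y⁻¹) 4 := by
      apply integral_eq_sub_of_hasDerivAt
      · intro s hs
        rw [huIcc] at hs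
        have hs0 : s ≠ 0 := by have := hs.1; intro h; rw [h] at this; linarith
        exact (hasDerivAt_inv hs0).neg.congr_deriv (by ring)
      · apply ContinuousOn.intervalIntegrable
        apply ContinuousOn.inv₀ (Continuous.continuousOn (by continuity))
        intro s hs
        rw [huIcc] at hs
        have : (0:ℝ) < s := by linarith [hs.1]
        positivity
    rw [this]
    ring
  have hintbound : |∫ s in (4:ℝ)..x₀, -(v s / s ^ 2)| ≤ u x₀ / 8 := by
    have h1 : |∫ s in (4:ℝ)..x₀, -(v s / s ^ 2)| ≤ ∫ s in (4:ℝ)..x₀, |(-(v s / s ^ 2))| :=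
      intervalIntegral.abs_integral_le_integral_abs h4x₀
    have h2 : ∫ s in (4:ℝ)..x₀, |(-(v s / s ^ 2))| ≤ ∫ s in (4:ℝ)..x₀, (u x₀ / 2) * (s ^ 2)⁻¹ := by
      apply intervalIntegral.integral_mono_on h4x₀
      · apply ContinuousOn.intervalIntegrable
        apply ContinuousOn.abs
        apply ContinuousOn.neg
        apply ContinuousOn.div hvcont.continuousOn (Continuous.continuousOn (by continuity))
        intro s hs
        rw [huIcc] at hs
        have : (0:ℝ) < s := by linarith [hs.1]
        positivity
      · apply ContinuousOn.intervalIntegrable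
        apply ContinuousOn.mul continuousOn_const
        apply ContinuousOn.inv₀ (Continuous.continuousOn (by continuity))
        intro s hs
        rw [huIcc] at hs
        have : (0:ℝ) < s := by linarith [hs.1]
        positivity
      · exact hptwise
    have h3 : ∫ s in (4:ℝ)..x₀, (u x₀ / 2) * (s ^ 2)⁻¹ = (u x₀ / 2) * (4⁻¹ - x₀⁻¹) := by
      rw [intervalIntegral.integral_const_mul, hinv]
    have h4 : (u x₀ / 2) * (4⁻¹ - x₀⁻¹) ≤ u x₀ / 8 := by
      have hx₀inv : (0:ℝ) ≤ x₀⁻¹ := by positivity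
      nlinarith
    linarith
  have hvx₀ : |v x₀| ≤ u x₀ / 2 := hvabs x₀ hx₀pos.le
  have hv4 : |v 4| ≤ u 4 / 2 := hvabs 4 (by norm_num)
  -- conclude
  have habs2 : -(v x₀ / x₀) ≤ u x₀ / 8 := by
    have h := (abs_le.1 hvx₀).1
    rw [neg_div' , div_le_div_iff₀ hx₀pos (by norm_num : (0:ℝ) < 8)]
    nlinarith
  have habs1 : v 4 / 4 ≤ 1 := by
    have h4 : |v 4| ≤ 4 := by linarith
    have := (abs_le.1 h4).2
    linarith
  have hineq : u x₀ ≤ 12 := by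
    have e1 : u x₀ = u 4 + v 4 / 4 - v x₀ / x₀ + ∫ s in (4:ℝ)..x₀, -(v s / s ^ 2) := by
      linarith [hAB]
    have hle := le_abs_self (∫ s in (4:ℝ)..x₀, -(v s / s ^ 2))
    linarith
  calc u x ≤ u x₀ := hmaxle x (right_mem_Icc.2 hx)
    _ ≤ 12 := hineq

lemma besselJ_one_decay (z : ℝ) (hz : 0 < z) : |besselJ 1 z| ≤ 4 / Real.sqrt z := by
  have hsp : 0 < Real.sqrt z := Real.sqrt_pos.2 hz
  rw [le_div_iff₀ hsp]
  rcases le_or_gt 4 z with h | h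
  · have hd := besselJ_decay z h
    have h1 : besselJ 1 z ^ 2 * z ≤ 12 := by nlinarith [sq_nonneg (besselJ 0 z)]
    have h2 : (|besselJ 1 z| * Real.sqrt z) ^ 2 ≤ 16 := by
      rw [mul_pow, sq_abs, Real.sq_sqrt hz.le]
      nlinarith
    nlinarith [abs_nonneg (besselJ 1 z), Real.sqrt_nonneg z,
      sq_nonneg (|besselJ 1 z| * Real.sqrt z - 4)]
  · have h1 := abs_besselJ_le_one 1 z
    have hs : Real.sqrt z ≤ 2 := by
      rw [show (2:ℝ) = Real.sqrt 4 by
        rw [show (4:ℝ) = 2 ^ 2 by norm_num, Real.sqrt_sq (by norm_num : (0:ℝ) ≤ 2)]]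
      exact Real.sqrt_le_sqrt h.le
    nlinarith [abs_nonneg (besselJ 1 z)]

lemma g_abs_le_one (r τ : ℝ) :
    |besselJ 1 (Real.sqrt (τ ^ 2 - r ^ 2)) / Real.sqrt (τ ^ 2 - r ^ 2)| ≤ 1 := by
  set z := Real.sqrt (τ ^ 2 - r ^ 2) with hzdef
  have hz : 0 ≤ z := Real.sqrt_nonneg _
  rcases eq_or_lt_of_le hz with h | h
  · rw [← h]
    norm_num
  · rw [abs_div, abs_of_pos h, div_le_one h]
    calc |besselJ 1 z| ≤ |z| := abs_besselJ_one_le z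
      _ = z := abs_of_pos h

lemma g_measurable (r : ℝ) :
    Measurable (fun τ => besselJ 1 (Real.sqrt (τ ^ 2 - r ^ 2)) / Real.sqrt (τ ^ 2 - r ^ 2)) := by
  have h1 : Continuous fun τ : ℝ => Real.sqrt (τ ^ 2 - r ^ 2) := by fun_prop
  exact (((continuous_besselJ 1).comp h1).measurable).div h1.measurable

lemma g_ptwise_decay (r τ : ℝ) (hr : 0 < r) (h2r : 2 * r ≤ τ) (h1 : 1 ≤ τ) :
    |besselJ 1 (Real.sqrt (τ ^ 2 - r ^ 2)) / Real.sqrt (τ ^ 2 - r ^ 2)|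
      ≤ 16 * τ ^ (-(3:ℝ)/2) := by
  have hτ : 0 < τ := lt_of_lt_of_le one_pos h1
  have hw : τ ^ 2 / 4 ≤ τ ^ 2 - r ^ 2 := by nlinarith
  have hwpos : 0 < τ ^ 2 - r ^ 2 := lt_of_lt_of_le (by positivity) hw
  set z := Real.sqrt (τ ^ 2 - r ^ 2) with hzdef
  have hz2 : τ / 2 ≤ z := by
    have e : Real.sqrt (τ ^ 2 / 4) = τ / 2 := by
      rw [show τ ^ 2 / 4 = (τ / 2) ^ 2 by ring, Real.sqrt_sq (by positivity)]
    rw [hzdef, ← e]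
    exact Real.sqrt_le_sqrt hw
  have hzpos : 0 < z := lt_of_lt_of_le (by positivity) hz2
  have hszpos : 0 < Real.sqrt z := Real.sqrt_pos.2 hzpos
  have hb := besselJ_one_decay z hzpos
  rw [abs_div, abs_of_pos hzpos]
  have hsq : Real.sqrt τ / 2 ≤ Real.sqrt z := by
    have e : Real.sqrt (τ / 4) = Real.sqrt τ / 2 := by
      rw [show τ / 4 = τ * (1/2) ^ 2 by ring, Real.sqrt_mul hτ.le,
        Real.sqrt_sq (by norm_num : (0:ℝ) ≤ 1/2)]
      ring
    rw [← e]
    exact Real.sqrt_le_sqrt (by nlinarith)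
  have hstpos : 0 < Real.sqrt τ := Real.sqrt_pos.2 hτ
  have key : τ * Real.sqrt τ ≤ 4 * (Real.sqrt z * z) := by nlinarith
  have hrpow : τ ^ (-(3:ℝ)/2) = (τ * Real.sqrt τ)⁻¹ := by
    rw [show (-(3:ℝ)/2) = -(3/2) by ring, Real.rpow_neg hτ.le,
      show (3/2:ℝ) = 1 + 1/2 by norm_num, Real.rpow_add hτ, Real.rpow_one,
      ← Real.sqrt_eq_rpow]
  calc |besselJ 1 z| / z ≤ (4 / Real.sqrt z) / z := by gcongr
    _ = 4 / (Real.sqrt z * z) := by rw [div_div]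
    _ ≤ 16 / (τ * Real.sqrt τ) := by
        rw [div_le_div_iff₀ (by positivity) (by positivity)]
        nlinarith
    _ = 16 * τ ^ (-(3:ℝ)/2) := by rw [hrpow]; field_simp

lemma g_integrableOn (r M : ℝ) (hr : 0 < r) (hM : r ≤ M) :
    IntegrableOn (fun τ => besselJ 1 (Real.sqrt (τ ^ 2 - r ^ 2)) / Real.sqrt (τ ^ 2 - r ^ 2))
      (Ioi M) := by
  set g := fun τ => besselJ 1 (Real.sqrt (τ ^ 2 - r ^ 2)) / Real.sqrt (τ ^ 2 - r ^ 2) with hg_def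
  set d := max (M + 1) (2 * r) with hd_def
  have hMd : M ≤ d := le_trans (by linarith) (le_max_left _ _)
  have hd1 : 1 ≤ d := by
    have : M + 1 ≤ d := le_max_left _ _
    linarith
  have hd0 : (0:ℝ) < d := by linarith
  have piece1 : IntegrableOn g (Ioc M d) := by
    apply Integrable.mono' (integrableOn_const (C := (1:ℝ)) measure_Ioc_lt_top.ne)
      ((g_measurable r).aestronglyMeasurable.restrict)
    filter_upwards with τ
    exact g_abs_le_one r τ
  have piece2 : IntegrableOn g (Ioi d) := by
    have hbint : IntegrableOn (fun τ => 16 * τ ^ (-(3:ℝ)/2)) (Ioi d) := by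
      apply Integrable.const_mul
      exact integrableOn_Ioi_rpow_of_lt (by norm_num) hd0
    apply Integrable.mono' hbint ((g_measurable r).aestronglyMeasurable.restrict)
    rw [ae_restrict_iff' measurableSet_Ioi]
    filter_upwards with τ hτ
    have h2r : 2 * r ≤ τ := le_trans (le_max_right _ _) (le_of_lt hτ)
    have h1 : 1 ≤ τ := le_trans hd1 (le_of_lt hτ)
    exact g_ptwise_decay r τ hr h2r h1
  have hsub : Ioi M ⊆ Ioc M d ∪ Ioi d := by
    intro x hx
    rcases le_or_gt x d with h | h
    · exact Or.inl ⟨hx, h⟩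
    · exact Or.inr h
  exact (piece1.union piece2).mono_set hsub

lemma hasDerivAt_F (r τ : ℝ) (hr : 0 < r) (hτ : r < τ) :
    HasDerivAt (fun y => besselJ 0 (Real.sqrt (y ^ 2 - r ^ 2)))
      (besselJ 1 (Real.sqrt (τ ^ 2 - r ^ 2)) / Real.sqrt (τ ^ 2 - r ^ 2) * τ) τ := by
  have hτ0 : 0 < τ := lt_trans hr hτ
  have hw : 0 < τ ^ 2 - r ^ 2 := by nlinarith
  have hzpos : 0 < Real.sqrt (τ ^ 2 - r ^ 2) := Real.sqrt_pos.2 hw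
  have h1 : HasDerivAt (fun y : ℝ => y ^ 2 - r ^ 2) (2 * τ) τ := by
    simpa using (hasDerivAt_pow 2 τ).sub_const (r ^ 2)
  have h2 : HasDerivAt (fun y => Real.sqrt (y ^ 2 - r ^ 2))
      (τ / Real.sqrt (τ ^ 2 - r ^ 2)) τ := by
    have h := (Real.hasDerivAt_sqrt (ne_of_gt hw)).comp τ h1
    refine h.congr_deriv ?_
    field_simp
  have h0 := (hasDerivAt_besselJ_zero (Real.sqrt (τ ^ 2 - r ^ 2))).comp τ h2
  refine h0.congr_deriv ?_
  ring

lemma hasDerivAt_Fdiv (r τ : ℝ) (hr : 0 < r) (hτ : r < τ) :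
    HasDerivAt (fun y => besselJ 0 (Real.sqrt (y ^ 2 - r ^ 2)) / y)
      (besselJ 1 (Real.sqrt (τ ^ 2 - r ^ 2)) / Real.sqrt (τ ^ 2 - r ^ 2)
        - besselJ 0 (Real.sqrt (τ ^ 2 - r ^ 2)) / τ ^ 2) τ := by
  have hτ0 : 0 < τ := lt_trans hr hτ
  have h := (hasDerivAt_F r τ hr hτ).div (hasDerivAt_id τ) (ne_of_gt hτ0)
  refine h.congr_deriv ?_
  have hw : 0 < τ ^ 2 - r ^ 2 := by nlinarith
  have hzpos : 0 < Real.sqrt (τ ^ 2 - r ^ 2) := Real.sqrt_pos.2 hw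
  simp only [Pi.div_apply, id]
  field_simp

lemma F_integrableOn (r M : ℝ) (hM : 0 < M) :
    IntegrableOn (fun τ => besselJ 0 (Real.sqrt (τ ^ 2 - r ^ 2)) / τ ^ 2) (Ioi M) := by
  have hbint : IntegrableOn (fun τ : ℝ => τ ^ (-(2:ℝ))) (Ioi M) :=
    integrableOn_Ioi_rpow_of_lt (by norm_num) hM
  have hmeas : Measurable fun τ : ℝ => besselJ 0 (Real.sqrt (τ ^ 2 - r ^ 2)) / τ ^ 2 := by
    have h1 : Continuous fun τ : ℝ => Real.sqrt (τ ^ 2 - r ^ 2) := by fun_prop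
    exact (((continuous_besselJ 0).comp h1).measurable).div (by fun_prop)
  apply Integrable.mono' hbint hmeas.aestronglyMeasurable.restrict
  rw [ae_restrict_iff' measurableSet_Ioi]
  filter_upwards with τ hτ
  have hτ0 : 0 < τ := lt_trans hM hτ
  rw [Real.norm_eq_abs, abs_div, abs_of_pos (by positivity : (0:ℝ) < τ ^ 2),
    Real.rpow_neg hτ0.le]
  rw [show ((2:ℝ)) = ((2:ℕ):ℝ) by norm_num, Real.rpow_natCast]
  rw [div_le_iff₀ (by positivity), inv_mul_cancel₀ (by positivity)]
  exact abs_besselJ_le_one 0 _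

lemma integral_g_eq (r M : ℝ) (hr : 0 < r) (hM : r < M) :
    ∫ τ in Ioi M, besselJ 1 (Real.sqrt (τ ^ 2 - r ^ 2)) / Real.sqrt (τ ^ 2 - r ^ 2)
      = (∫ τ in Ioi M, besselJ 0 (Real.sqrt (τ ^ 2 - r ^ 2)) / τ ^ 2)
        - besselJ 0 (Real.sqrt (M ^ 2 - r ^ 2)) / M := by
  have hM0 : 0 < M := lt_trans hr hM
  set g := fun τ => besselJ 1 (Real.sqrt (τ ^ 2 - r ^ 2)) / Real.sqrt (τ ^ 2 - r ^ 2) with hg_def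
  set h := fun τ => besselJ 0 (Real.sqrt (τ ^ 2 - r ^ 2)) / τ ^ 2 with hh_def
  have hgint : IntegrableOn g (Ioi M) := g_integrableOn r M hr hM.le
  have hhint : IntegrableOn h (Ioi M) := F_integrableOn r M hM0
  have key : ∫ τ in Ioi M, (g τ - h τ)
      = 0 - besselJ 0 (Real.sqrt (M ^ 2 - r ^ 2)) / M := by
    apply integral_Ioi_of_hasDerivAt_of_tendsto'
      (f := fun y => besselJ 0 (Real.sqrt (y ^ 2 - r ^ 2)) / y)
    · intro x hx
      exact hasDerivAt_Fdiv r x hr (lt_of_lt_of_le hM hx)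
    · exact hgint.sub hhint
    · apply squeeze_zero_norm' (a := fun y : ℝ => y⁻¹) _ tendsto_inv_atTop_zero
      filter_upwards [eventually_ge_atTop (1:ℝ)] with y hy
      rw [Real.norm_eq_abs, abs_div, abs_of_pos (by linarith : (0:ℝ) < y)]
      rw [div_le_iff₀ (by linarith : (0:ℝ) < y), inv_mul_cancel₀ (by linarith : y ≠ 0)]
      exact abs_besselJ_le_one 0 _
  rw [integral_sub hgint hhint] at key
  linarith


lemma integral_g_bound (r M : ℝ) (hr : 0 < r) (hM : r < M) :
    |∫ τ in Ioi M, besselJ 1 (Real.sqrt (τ ^ 2 - r ^ 2)) / Real.sqrt (τ ^ 2 - r ^ 2)| ≤ 2 / M := by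
  have hM0 : 0 < M := lt_trans hr hM
  rw [integral_g_eq r M hr hM]
  have hB : |besselJ 0 (Real.sqrt (M ^ 2 - r ^ 2)) / M| ≤ 1 / M := by
    rw [abs_div, abs_of_pos hM0]
    gcongr
    exact abs_besselJ_le_one 0 _
  have hbint : IntegrableOn (fun τ : ℝ => τ ^ (-(2:ℝ))) (Ioi M) :=
    integrableOn_Ioi_rpow_of_lt (by norm_num) hM0
  have hA : |∫ τ in Ioi M, besselJ 0 (Real.sqrt (τ ^ 2 - r ^ 2)) / τ ^ 2| ≤ 1 / M := by
    have h1 : ‖∫ τ in Ioi M, besselJ 0 (Real.sqrt (τ ^ 2 - r ^ 2)) / τ ^ 2‖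
        ≤ ∫ τ in Ioi M, τ ^ (-(2:ℝ)) := by
      apply MeasureTheory.norm_integral_le_of_norm_le hbint
      rw [ae_restrict_iff' measurableSet_Ioi]
      filter_upwards with τ hτ
      have hτ0 : 0 < τ := lt_trans hM0 hτ
      rw [Real.norm_eq_abs, abs_div, abs_of_pos (by positivity : (0:ℝ) < τ ^ 2),
        Real.rpow_neg hτ0.le,
        show ((2:ℝ)) = ((2:ℕ):ℝ) by norm_num, Real.rpow_natCast,
        div_le_iff₀ (by positivity), inv_mul_cancel₀ (by positivity)]
      exact abs_besselJ_le_one 0 _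
    have h2 : ∫ τ in Ioi M, τ ^ (-(2:ℝ)) = 1 / M := by
      rw [integral_Ioi_rpow_of_lt (by norm_num) hM0]
      norm_num [Real.rpow_neg_one]
    rw [Real.norm_eq_abs] at h1
    linarith [h1, h2.symm ▸ h1]
  calc |(∫ τ in Ioi M, besselJ 0 (Real.sqrt (τ ^ 2 - r ^ 2)) / τ ^ 2)
        - besselJ 0 (Real.sqrt (M ^ 2 - r ^ 2)) / M|
      ≤ |∫ τ in Ioi M, besselJ 0 (Real.sqrt (τ ^ 2 - r ^ 2)) / τ ^ 2|
        + |besselJ 0 (Real.sqrt (M ^ 2 - r ^ 2)) / M| := abs_sub _ _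
    _ ≤ 1 / M + 1 / M := add_le_add hA hB
    _ = 2 / M := by ring

lemma integral_g_bound' (r M : ℝ) (hr : 0 < r) (hM : r ≤ M) :
    |∫ τ in Ioi M, besselJ 1 (Real.sqrt (τ ^ 2 - r ^ 2)) / Real.sqrt (τ ^ 2 - r ^ 2)| ≤ 2 / M := by
  rcases lt_or_eq_of_le hM with h | h
  · exact integral_g_bound r M hr h
  · subst h
    set g := fun τ => besselJ 1 (Real.sqrt (τ ^ 2 - r ^ 2)) / Real.sqrt (τ ^ 2 - r ^ 2) with hg_def
    have key : ∀ a ∈ Ioi r, |∫ τ in Ioi r, g τ| ≤ (a - r) + 2 / a := by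
      intro a ha
      rw [mem_Ioi] at ha
      have hint1 : IntegrableOn g (Ioc r a) :=
        (g_integrableOn r r hr le_rfl).mono_set Ioc_subset_Ioi_self
      have hint2 : IntegrableOn g (Ioi a) := g_integrableOn r a hr ha.le
      have hsplit : ∫ τ in Ioi r, g τ = (∫ τ in Ioc r a, g τ) + ∫ τ in Ioi a, g τ := by
        rw [← setIntegral_union (Ioc_disjoint_Ioi le_rfl) measurableSet_Ioi hint1 hint2,
          Ioc_union_Ioi_eq_Ioi ha.le]
      have h1 : |∫ τ in Ioc r a, g τ| ≤ a - r := by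
        have hb : ‖∫ τ in Ioc r a, g τ‖ ≤ 1 * (volume (Ioc r a)).toReal := by
          apply norm_setIntegral_le_of_norm_le_const
            (by rw [Real.volume_Ioc]; exact ENNReal.ofReal_lt_top)
            (fun x _ => g_abs_le_one r x)
        rw [Real.norm_eq_abs, Real.volume_Ioc, ENNReal.toReal_ofReal (by linarith)] at hb
        linarith
      have h2 := integral_g_bound r a hr ha
      calc |∫ τ in Ioi r, g τ| = |(∫ τ in Ioc r a, g τ) + ∫ τ in Ioi a, g τ| := by rw [hsplit]
        _ ≤ |∫ τ in Ioc r a, g τ| + |∫ τ in Ioi a, g τ| := abs_add_le _ _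
        _ ≤ (a - r) + 2 / a := add_le_add h1 h2
    have hcont : ContinuousAt (fun a : ℝ => (a - r) + 2 / a) r :=
      ((continuousAt_id.sub continuousAt_const).add
        (continuousAt_const.div continuousAt_id hr.ne'))
    have htend : Tendsto (fun a : ℝ => (a - r) + 2 / a) (𝓝[>] r) (𝓝 (2 / r)) := by
      have := hcont.tendsto.mono_left (nhdsWithin_le_nhds (s := Ioi r))
      simpa using this
    exact ge_of_tendsto htend (eventually_nhdsWithin_of_forall key)


/-- The radial integral kernel of the free Klein–Gordon cosine propagator
`cos(t√(−Δ+1))/(−Δ+1)` on `ℝ³`: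
`C₁(r,t) = (1/(4π)) ( r⁻¹ 𝟙_{t<r} − ∫_{max(t,r)}^∞ J_1(√(τ²−r²))/√(τ²−r²) dτ )`. -/
noncomputable def C1 (r t : ℝ) : ℝ :=
  (1 / (4 * Real.pi)) *
    ((if t < r then r⁻¹ else 0) -
      ∫ τ in Set.Ioi (max t r),
        besselJ 1 (Real.sqrt (τ ^ 2 - r ^ 2)) / Real.sqrt (τ ^ 2 - r ^ 2))

/-- There is an absolute constant `C > 0` such that for every `r > 0` and every `t > 0`,
`|C₁(r,t)| ≤ C / t`: the free Klein–Gordon cosine kernel obeys the same `|t|⁻¹`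
pointwise decay as the free wave equation. -/
theorem C1_pointwise_t_decay :
    ∃ C : ℝ, 0 < C ∧ ∀ r t : ℝ, 0 < r → 0 < t → |C1 r t| ≤ C / t := by
  refine ⟨1, one_pos, fun r t hr ht => ?_⟩
  have hpi := Real.pi_gt_three
  set M := max t r with hM_def
  have hrM : r ≤ M := le_max_right _ _
  have htM : t ≤ M := le_max_left _ _
  have hM0 : 0 < M := lt_of_lt_of_le ht htM
  have hI := integral_g_bound' r M hr hrM
  have h2M : 2 / M ≤ 2 / t := by gcongr
  have hind : |(if t < r then r⁻¹ else 0)| ≤ 1 / t := by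
    split_ifs with h
    · rw [abs_of_pos (inv_pos.2 hr), one_div]
      exact inv_anti₀ ht h.le
    · rw [abs_zero]
      positivity
  have habs : |C1 r t| ≤ (1 / (4 * Real.pi)) * (1 / t + 2 / t) := by
    rw [C1, abs_mul, abs_of_pos (by positivity : (0:ℝ) < 1 / (4 * Real.pi))]
    apply mul_le_mul_of_nonneg_left _ (by positivity)
    calc |(if t < r then r⁻¹ else 0) -
          ∫ τ in Set.Ioi M, besselJ 1 (Real.sqrt (τ ^ 2 - r ^ 2)) / Real.sqrt (τ ^ 2 - r ^ 2)|
        ≤ |(if t < r then r⁻¹ else 0)|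
          + |∫ τ in Set.Ioi M, besselJ 1 (Real.sqrt (τ ^ 2 - r ^ 2)) / Real.sqrt (τ ^ 2 - r ^ 2)| :=
          abs_sub _ _
      _ ≤ 1 / t + 2 / t := add_le_add hind (le_trans hI h2M)
  have e : (1 / (4 * Real.pi)) * (1 / t + 2 / t) = 3 / (4 * Real.pi * t) := by
    field_simp
    ring
  have hfin : 3 / (4 * Real.pi * t) ≤ 1 / t := by
    rw [div_le_div_iff₀ (by positivity) ht]
    nlinarith
  calc |C1 r t| ≤ (1 / (4 * Real.pi)) * (1 / t + 2 / t) := habs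
    _ = 3 / (4 * Real.pi * t) := e
    _ ≤ 1 / t := hfin
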